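/- GGF upper bound via y_max cap: Let w₁ ≥ ... ≥ wₙ ≥ 0 be nonincreasing weights with wₙ₊₁ = 0, y ∈ ℝⁿ with yᵢ ≥ 0, Y = Σᵢ yᵢ, y_max = maxᵢ yᵢ > 0, m = |{i : yᵢ > 0}|, q = min(m, ⌊Y/y_max⌋), and r = Y − q·y_max. Then the joint GGF improvement satisfies F_GGF(Z+y) − F_GGF(Z) ≤ y_max·Σₖ₌₁^q wₖ + r·w_{q+1}. -/

import Mathlib

open Finset

/-- Generalized Gini fairness function (ascending order statistics). -/
noncomputable def FGGF {n : ℕ} (w Z : Fin n → ℝ) : ℝ :=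
  ∑ k, w k * Z (Tuple.sort Z k)

/-- Weights extended by `w_{n+1} := 0` (0-indexed). -/
def wext {n : ℕ} (w : Fin n → ℝ) (k : ℕ) : ℝ :=
  if h : k < n then w ⟨k, h⟩ else 0

/-- Abel summation identity. -/
lemma abel_id (w u : ℕ → ℝ) (N : ℕ) :
    ∑ k ∈ range N, w k * u k
      = (∑ j ∈ range N, (w j - w (j+1)) * (∑ k ∈ range (j+1), u k))
        + w N * (∑ k ∈ range N, u k) := by
  induction N with
  | zero => simp
  | succ N ih =>
    rw [sum_range_succ, ih,
      sum_range_succ (fun j => (w j - w (j+1)) * (∑ k ∈ range (j+1), u k)),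
      sum_range_succ u N]
    ring

/-- Greedy/water-filling bound for a nonincreasing weight sequence vanishing at `n`. -/
lemma greedy_bound (n q : ℕ) (hqn : q ≤ n) (w : ℕ → ℝ)
    (hwa : ∀ j, w (j+1) ≤ w j) (hwn : w n = 0)
    (x : ℕ → ℝ) (hx0 : ∀ j, 0 ≤ x j) (c : ℝ) (hxc : ∀ j, x j ≤ c)
    (Y : ℝ) (hY : Y = ∑ j ∈ range n, x j) :
    ∑ k ∈ range n, w k * x k
      ≤ c * (∑ k ∈ range q, w k) + (Y - q * c) * w q := by
  set r : ℝ := Y - q * c with hrdef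
  set b : ℕ → ℝ := fun k => if k < q then c else if k = q then r else 0 with hb
  have hsplit : ∀ k, b k = c * (if k < q then 1 else 0) + r * (if k = q then 1 else 0) := by
    intro k
    simp only [hb]
    by_cases h : k < q
    · rw [if_pos h, if_pos h, if_neg (by omega)]; ring
    · by_cases h2 : k = q
      · rw [if_neg h, if_pos h2, if_neg h, if_pos h2]; ring
      · rw [if_neg h, if_neg h2, if_neg h, if_neg h2]; ring
  have hfilter : ∀ t, q ≤ t → (range t).filter (· < q) = range q := by
    intro t ht
    ext k; simp only [mem_filter, mem_range]; omega
  -- partial sums of the greedy vector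
  have hTle : ∀ t, t ≤ q → ∑ k ∈ range t, b k = t * c := by
    intro t ht
    rw [Finset.sum_congr rfl (fun k hk => ?_), Finset.sum_const, card_range, nsmul_eq_mul]
    simp only [hb]
    rw [if_pos (lt_of_lt_of_le (mem_range.mp hk) ht)]
  have hTgt : ∀ t, q < t → ∑ k ∈ range t, b k = Y := by
    intro t ht
    rw [Finset.sum_congr rfl (fun k _ => hsplit k), Finset.sum_add_distrib,
      ← Finset.mul_sum, ← Finset.mul_sum, Finset.sum_ite_eq' (range t) q (fun _ => (1:ℝ)),
      if_pos (mem_range.mpr ht), ← Finset.sum_filter, hfilter t ht.le,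
      Finset.sum_const, card_range, nsmul_eq_mul, mul_one, mul_one]
    simp only [hrdef]; ring
  -- value of the greedy objective
  have hgoal : ∑ k ∈ range n, w k * b k = c * (∑ k ∈ range q, w k) + r * w q := by
    have h1 : ∀ k ∈ range n, w k * b k = c * (if k < q then w k else 0)
        + r * (if k = q then w k else 0) := by
      intro k _
      rw [hsplit k]
      by_cases h : k < q
      · rw [if_pos h, if_pos h, if_neg (by omega), if_neg (by omega)]; ring
      · by_cases h2 : k = q
        · rw [if_neg h, if_pos h2, if_neg h, if_pos h2]; ring
        · rw [if_neg h, if_neg h2, if_neg h, if_neg h2]; ring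
    rw [Finset.sum_congr rfl h1, Finset.sum_add_distrib, ← Finset.mul_sum, ← Finset.mul_sum,
      ← Finset.sum_filter, hfilter n hqn, Finset.sum_ite_eq' (range n) q w]
    rcases lt_or_eq_of_le hqn with h | h
    · rw [if_pos (mem_range.mpr h)]
    · rw [if_neg (by simp [h]), h, hwn]
  -- partial sums of x are dominated by those of b
  have hS : ∀ t, t ≤ n → ∑ k ∈ range t, x k ≤ ∑ k ∈ range t, b k := by
    intro t htn
    rcases le_or_gt t q with ht | ht
    · rw [hTle t ht]
      calc ∑ k ∈ range t, x k ≤ ∑ _k ∈ range t, c := sum_le_sum (fun k _ => hxc k)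
        _ = t * c := by rw [Finset.sum_const, card_range, nsmul_eq_mul]
    · rw [hTgt t ht, hY]
      exact sum_le_sum_of_subset_of_nonneg (range_subset_range.mpr htn) (fun k _ _ => hx0 k)
  calc ∑ k ∈ range n, w k * x k
      = (∑ j ∈ range n, (w j - w (j+1)) * (∑ k ∈ range (j+1), x k))
        + w n * (∑ k ∈ range n, x k) := abel_id w x n
    _ ≤ (∑ j ∈ range n, (w j - w (j+1)) * (∑ k ∈ range (j+1), b k))
        + w n * (∑ k ∈ range n, b k) := by
        rw [hwn, zero_mul, zero_mul]
        refine add_le_add (sum_le_sum fun j hj => ?_) le_rfl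
        exact mul_le_mul_of_nonneg_left (hS (j+1) (mem_range.mp hj))
          (sub_nonneg.mpr (hwa j))
    _ = ∑ k ∈ range n, w k * b k := (abel_id w b n).symm
    _ = c * (∑ k ∈ range q, w k) + r * w q := hgoal

/-- **GGF upper bound via the `y_max` cap:** with `Y = ∑ y_i`,
`y_max = max_i y_i > 0`, `m` the number of strictly positive increments,
`q = min(m, ⌊Y/y_max⌋)` and `r = Y - q·y_max`, the joint GGF improvement is
at most `y_max · ∑_{k=1}^q w_k + r · w_{q+1}`. -/
theorem ggf_ymax_cap_upper_bound {n : ℕ} (hn : 0 < n) (w : Fin n → ℝ)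
    (hw : ∀ i j : Fin n, i ≤ j → w j ≤ w i) (hw0 : ∀ k, 0 ≤ w k)
    (Z y : Fin n → ℝ) (hy : ∀ i, 0 ≤ y i)
    (Y : ℝ) (hY : Y = ∑ i, y i)
    (ymax : ℝ)
    (hymax : ymax = Finset.univ.sup' ⟨⟨0, hn⟩, Finset.mem_univ _⟩ y)
    (hpos : 0 < ymax)
    (m : ℕ) (hm : m = (Finset.univ.filter (fun i => 0 < y i)).card)
    (q : ℕ) (hq : q = min m (Nat.floor (Y / ymax)))
    (r : ℝ) (hr : r = Y - q * ymax) :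
    FGGF w (Z + y) - FGGF w Z ≤
      ymax * (∑ k ∈ Finset.range q, wext w k) + r * wext w q := by
  set σs := Tuple.sort Z with hσs
  -- Step 1: rearrangement inequality
  have hanti : Antivary w ((Z + y) ∘ Tuple.sort (Z + y)) := by
    intro i j hij
    refine hw i j ?_
    by_contra h
    exact absurd (Tuple.monotone_sort (Z + y) (le_of_not_ge h)) (not_le.mpr hij)
  have h1 : FGGF w (Z + y) ≤ ∑ i, w i * y (σs i) + FGGF w Z := by
    have := hanti.sum_mul_le_sum_mul_comp_perm
      (σ := (Tuple.sort (Z + y))⁻¹ * σs)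
    simp only [Function.comp_apply, Equiv.Perm.mul_apply,
      Equiv.Perm.coe_inv, Equiv.apply_symm_apply, Pi.add_apply] at this
    calc FGGF w (Z + y) = ∑ i, w i * ((Z + y) ∘ Tuple.sort (Z + y)) i := rfl
      _ ≤ ∑ i, w i * (Z (σs i) + y (σs i)) := this
      _ = ∑ i, w i * y (σs i) + FGGF w Z := by
          unfold FGGF
          rw [← Finset.sum_add_distrib]
          exact Finset.sum_congr rfl fun i _ => by ring
  -- Step 2: apply the greedy bound to x = y ∘ σs (extended by 0)
  set x : ℕ → ℝ := fun k => if h : k < n then y (σs ⟨k, h⟩) else 0 with hx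
  have hmn : m ≤ n := by
    rw [hm]
    calc (Finset.univ.filter (fun i => 0 < y i)).card ≤ (Finset.univ : Finset (Fin n)).card :=
        Finset.card_filter_le _ _
      _ = n := by simp
  have hqn : q ≤ n := le_trans (hq ▸ min_le_left m _) hmn
  have hwa : ∀ j, wext w (j+1) ≤ wext w j := by
    intro j
    unfold wext
    by_cases h1 : j + 1 < n
    · rw [dif_pos h1, dif_pos (by omega : j < n)]
      exact hw ⟨j, by omega⟩ ⟨j+1, h1⟩ (by simp [Fin.le_def])
    · by_cases h2 : j < n
      · rw [dif_neg h1, dif_pos h2]; exact hw0 _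
      · rw [dif_neg h1, dif_neg h2]
  have hwn : wext w n = 0 := dif_neg (lt_irrefl n)
  have hx0 : ∀ j, 0 ≤ x j := by
    intro j; simp only [hx]
    split
    · exact hy _
    · exact le_refl 0
  have hxc : ∀ j, x j ≤ ymax := by
    intro j; simp only [hx]
    split
    · exact hymax ▸ Finset.le_sup' y (Finset.mem_univ _)
    · exact hpos.le
  have hY' : Y = ∑ j ∈ range n, x j := by
    rw [← Fin.sum_univ_eq_sum_range x n, hY, ← Equiv.sum_comp σs y]
    exact Finset.sum_congr rfl fun i _ => by simp [hx, i.isLt]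
  have hconv : ∑ i, w i * y (σs i) = ∑ k ∈ range n, wext w k * x k := by
    rw [← Fin.sum_univ_eq_sum_range (fun k => wext w k * x k) n]
    refine Finset.sum_congr rfl fun i _ => ?_
    simp [wext, hx, i.isLt]
  have h2 := greedy_bound n q hqn (wext w) hwa hwn x hx0 ymax hxc Y hY'
  rw [← hconv] at h2
  rw [hr]
  linarith
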